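/- For all nonnegative integers a and b, the quantity Λ(a,b) := ∑_{j=1}^{b} κ_{j+a−1} · (b − 1 + κ_{j−1} + κ_{b−j} − κ_b) is nonnegative: Λ(a,b) ≥ 0. -/
import Mathlib


open Finset Filter Topology

/-- The `n`-th harmonic number `H_n = ∑_{i=1}^n 1/i`. -/
noncomputable def H (n : ℕ) : ℝ := ∑ i ∈ Finset.range n, (1 : ℝ) / (i + 1)

/-- `κ_n = 2(n+1)H_n - 4n`, the mean number of key comparisons for QuickSort on `n` keys. -/
noncomputable def κ (n : ℕ) : ℝ := 2 * (n + 1) * H n - 4 * n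

lemma H_succ (n : ℕ) : H (n + 1) = H n + 1 / ((n : ℝ) + 1) := by
  simp [H, Finset.sum_range_succ]

lemma H_mono : Monotone H := by
  apply monotone_nat_of_le_succ
  intro n
  rw [H_succ]
  have : (0:ℝ) < 1 / ((n:ℝ) + 1) := by positivity
  linarith

lemma kappa_succ (n : ℕ) : κ (n + 1) = κ n + 2 * H (n + 1) - 2 := by
  have hn : ((n : ℝ) + 1) ≠ 0 := by positivity
  simp only [κ, H_succ]
  push_cast
  field_simp
  ring

lemma sum_kappa (b : ℕ) :
    2 * ∑ i ∈ Finset.range b, κ i = (b : ℝ) * κ b - (b : ℝ) * ((b : ℝ) - 1) := by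
  induction b with
  | zero => simp [κ, H]
  | succ b ih =>
      rw [Finset.sum_range_succ, mul_add, ih, kappa_succ]
      have hH : H (b + 1) = H b + 1 / ((b:ℝ) + 1) := H_succ b
      have hb : ((b : ℝ) + 1) ≠ 0 := by positivity
      simp only [κ, hH]
      push_cast
      field_simp
      ring

/-- antitone of `u ↦ κ (u + t) + κ (b - 1 - u + t)` on `2u+1 ≤ b`. -/
lemma pair_antitone (b t : ℕ) : ∀ u v : ℕ, u ≤ v → 2 * v + 1 ≤ b →
    κ (v + t) + κ (b - 1 - v + t) ≤ κ (u + t) + κ (b - 1 - u + t) := by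
  intro u v huv
  induction v, huv using Nat.le_induction with
  | base => intro _; exact le_rfl
  | succ v hv ih =>
      intro hvb
      have hvb' : 2 * v + 1 ≤ b := by omega
      refine le_trans ?_ (ih hvb')
      have e1 : b - 1 - (v + 1) + t = (b - 2 - v) + t := by omega
      have e2 : b - 1 - v + t = ((b - 2 - v) + t) + 1 := by omega
      have e3 : (v + 1) + t = (v + t) + 1 := by omega
      rw [e1, e2, e3, kappa_succ, kappa_succ]
      have hmono : H ((v + t) + 1) ≤ H (((b - 2 - v) + t) + 1) := by
        apply H_mono; omega
      linarith

theorem lambda_nonneg (a b : ℕ) :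
    0 ≤ ∑ j ∈ Finset.Icc 1 b,
      κ (j + a - 1) * ((b : ℝ) - 1 + κ (j - 1) + κ (b - j) - κ b) := by
  rcases Nat.eq_zero_or_pos b with hb | hb
  · simp [hb]
  set c : ℕ → ℝ := fun j => (b : ℝ) - 1 + κ (j - 1) + κ (b - j) - κ b with hc
  set g : ℕ → ℝ := fun j => κ (j - 1 + a) + κ (b - j + a) with hg
  -- representation via u = min (j-1) (b-j)
  have hrep : ∀ j ∈ Finset.Icc 1 b, ∀ t : ℕ,
      κ (j - 1 + t) + κ (b - j + t)
        = κ (min (j - 1) (b - j) + t) + κ (b - 1 - min (j - 1) (b - j) + t) := by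
    intro j hj t
    simp only [Finset.mem_Icc] at hj
    rcases le_total (j - 1) (b - j) with h | h
    · rw [min_eq_left h]
      congr 2
      omega
    · rw [min_eq_right h]
      rw [show b - j + t = min (b - j) (b - j) + t by simp]
      rw [add_comm (κ (j - 1 + t))]
      congr 2 <;> omega
  -- monovary
  have hmono : MonovaryOn c g (Finset.Icc 1 b : Set ℕ) := by
    intro i hi j hj hgij
    simp only [Finset.coe_Icc, Set.mem_Icc] at hi hj
    have hi' : i ∈ Finset.Icc 1 b := Finset.mem_Icc.2 hi
    have hj' : j ∈ Finset.Icc 1 b := Finset.mem_Icc.2 hj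
    set ui := min (i - 1) (b - i) with hui
    set uj := min (j - 1) (b - j) with huj
    have hbi : 2 * ui + 1 ≤ b := by omega
    have hbj : 2 * uj + 1 ≤ b := by omega
    have hgi : g i = κ (ui + a) + κ (b - 1 - ui + a) := hrep i hi' a
    have hgj : g j = κ (uj + a) + κ (b - 1 - uj + a) := hrep j hj' a
    rcases le_total ui uj with h | h
    · exfalso
      have := pair_antitone b a ui uj h hbj
      rw [← hgi, ← hgj] at this
      linarith
    · have := pair_antitone b 0 uj ui h hbi
      have hci : κ (i - 1 + 0) + κ (b - i + 0) = κ (ui + 0) + κ (b - 1 - ui + 0) :=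
        hrep i hi' 0
      have hcj : κ (j - 1 + 0) + κ (b - j + 0) = κ (uj + 0) + κ (b - 1 - uj + 0) :=
        hrep j hj' 0
      simp only [add_zero] at hci hcj this
      simp only [hc]
      linarith
  -- sum of c is zero
  have hsum1 : ∑ j ∈ Finset.Icc 1 b, κ (j - 1) = ∑ i ∈ Finset.range b, κ i := by
    apply Finset.sum_nbij' (fun j => j - 1) (fun i => i + 1)
    · intro j hj; simp only [Finset.mem_Icc] at hj; simp only [Finset.mem_range]; omega
    · intro i hi; simp only [Finset.mem_range] at hi; simp only [Finset.mem_Icc]; omega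
    · intro j hj; simp only [Finset.mem_Icc] at hj; omega
    · intro i hi; simp only [Finset.mem_range] at hi; omega
    · intro j hj; rfl
  have hsum2 : ∑ j ∈ Finset.Icc 1 b, κ (b - j) = ∑ i ∈ Finset.range b, κ i := by
    apply Finset.sum_nbij' (fun j => b - j) (fun i => b - i)
    · intro j hj; simp only [Finset.mem_Icc] at hj; simp only [Finset.mem_range]; omega
    · intro i hi; simp only [Finset.mem_range] at hi; simp only [Finset.mem_Icc]; omega
    · intro j hj; simp only [Finset.mem_Icc] at hj; omega
    · intro i hi; simp only [Finset.mem_range] at hi; omega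
    · intro j hj; rfl
  have hsum_c : ∑ j ∈ Finset.Icc 1 b, c j = 0 := by
    have hcard : (Finset.Icc 1 b).card = b := by rw [Nat.card_Icc]; omega
    have : ∑ j ∈ Finset.Icc 1 b, c j
        = ∑ j ∈ Finset.Icc 1 b, (((b : ℝ) - 1 - κ b) + (κ (j - 1) + κ (b - j))) := by
      apply Finset.sum_congr rfl; intro j hj; simp only [hc]; ring
    rw [this, Finset.sum_add_distrib, Finset.sum_const, hcard, Finset.sum_add_distrib,
      hsum1, hsum2, nsmul_eq_mul]
    have := sum_kappa b
    linarith
  -- Chebyshev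
  have cheb := hmono.sum_mul_sum_le_card_mul_sum
  rw [hsum_c, zero_mul] at cheb
  have hcard : ((Finset.Icc 1 b).card : ℝ) = (b : ℝ) := by
    have : (Finset.Icc 1 b).card = b := by rw [Nat.card_Icc]; omega
    exact_mod_cast this
  have hcg : 0 ≤ ∑ j ∈ Finset.Icc 1 b, c j * g j := by
    rw [hcard] at cheb
    have hbpos : (0:ℝ) < (b:ℝ) := by exact_mod_cast hb
    nlinarith
  -- relate ∑ c*g to twice the target sum
  have hrefl : ∑ j ∈ Finset.Icc 1 b, c j * κ (b - j + a)
      = ∑ j ∈ Finset.Icc 1 b, c j * κ (j - 1 + a) := by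
    apply Finset.sum_nbij' (fun j => b + 1 - j) (fun j => b + 1 - j)
    · intro j hj; simp only [Finset.mem_Icc] at hj ⊢; omega
    · intro j hj; simp only [Finset.mem_Icc] at hj ⊢; omega
    · intro j hj; simp only [Finset.mem_Icc] at hj; omega
    · intro j hj; simp only [Finset.mem_Icc] at hj; omega
    · intro j hj
      simp only [Finset.mem_Icc] at hj
      have e1 : b + 1 - j - 1 = b - j := by omega
      have e2 : b - (b + 1 - j) = j - 1 := by omega
      have e3 : b - (b + 1 - j) + a = j - 1 + a := by omega
      simp only [hc, e1, e2, e3]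
      ring
  have hsplit : ∑ j ∈ Finset.Icc 1 b, c j * g j
      = 2 * ∑ j ∈ Finset.Icc 1 b, c j * κ (j - 1 + a) := by
    have : ∑ j ∈ Finset.Icc 1 b, c j * g j
        = ∑ j ∈ Finset.Icc 1 b, (c j * κ (j - 1 + a) + c j * κ (b - j + a)) := by
      apply Finset.sum_congr rfl; intro j hj; simp only [hg]; ring
    rw [this, Finset.sum_add_distrib, hrefl]; ring
  have hfinal : ∑ j ∈ Finset.Icc 1 b,
      κ (j + a - 1) * ((b : ℝ) - 1 + κ (j - 1) + κ (b - j) - κ b)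
      = ∑ j ∈ Finset.Icc 1 b, c j * κ (j - 1 + a) := by
    apply Finset.sum_congr rfl
    intro j hj
    simp only [Finset.mem_Icc] at hj
    have e : j + a - 1 = j - 1 + a := by omega
    rw [e, hc, mul_comm]
  rw [hfinal]
  linarith [hcg, hsplit]
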